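/- Let d ≥ 2 and define T_d(ℓ) = (ℓ!)²/(d!)² for ℓ ∈ {1,…,d}. Then for every ℓ ∈ {2,…,d}, T_d(ℓ) > ∑_{k=1}^{ℓ-1} C(ℓ,k)·T_d(k). -/

import Mathlib

lemma term_le (ℓ k : ℕ) (hk1 : 1 ≤ k) (hk : k < ℓ) :
    ℓ.choose k * (Nat.factorial k) ^ 2 ≤ Nat.factorial ℓ * Nat.factorial (ℓ - 1) := by
  have hpos : 0 < Nat.factorial (ℓ - k) := Nat.factorial_pos _
  refine Nat.le_of_mul_le_mul_right ?_ hpos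
  have h1 : ℓ.choose k * (Nat.factorial k) ^ 2 * Nat.factorial (ℓ - k)
      = Nat.factorial ℓ * Nat.factorial k := by
    have := Nat.choose_mul_factorial_mul_factorial (le_of_lt hk)
    ring_nf
    ring_nf at this
    nlinarith [this]
  rw [h1]
  calc Nat.factorial ℓ * Nat.factorial k
      ≤ Nat.factorial ℓ * Nat.factorial (ℓ - 1) :=
        Nat.mul_le_mul_left _ (Nat.factorial_le (by omega))
    _ ≤ Nat.factorial ℓ * Nat.factorial (ℓ - 1) * Nat.factorial (ℓ - k) :=
        Nat.le_mul_of_pos_right _ hpos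

lemma nat_sum_lt (ℓ : ℕ) (hℓ : 2 ≤ ℓ) :
    ∑ k ∈ Finset.Ico 1 ℓ, ℓ.choose k * (Nat.factorial k) ^ 2 < (Nat.factorial ℓ) ^ 2 := by
  have hsum : ∑ k ∈ Finset.Ico 1 ℓ, ℓ.choose k * (Nat.factorial k) ^ 2
      ≤ ∑ _k ∈ Finset.Ico 1 ℓ, Nat.factorial ℓ * Nat.factorial (ℓ - 1) := by
    apply Finset.sum_le_sum
    intro k hk
    rw [Finset.mem_Ico] at hk
    exact term_le ℓ k hk.1 hk.2
  have hcard : ∑ _k ∈ Finset.Ico 1 ℓ, Nat.factorial ℓ * Nat.factorial (ℓ - 1)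
      = (ℓ - 1) * (Nat.factorial ℓ * Nat.factorial (ℓ - 1)) := by
    rw [Finset.sum_const, Nat.card_Ico, smul_eq_mul]
  have hfact : (Nat.factorial ℓ) ^ 2 = ℓ * (Nat.factorial ℓ * Nat.factorial (ℓ - 1)) := by
    have : Nat.factorial ℓ = ℓ * Nat.factorial (ℓ - 1) := by
      conv_lhs => rw [show ℓ = (ℓ - 1) + 1 by omega]
      rw [Nat.factorial_succ]
      congr 1 <;> omega
    rw [pow_two]
    nth_rewrite 2 [this]
    ring
  calc ∑ k ∈ Finset.Ico 1 ℓ, ℓ.choose k * (Nat.factorial k) ^ 2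
      ≤ (ℓ - 1) * (Nat.factorial ℓ * Nat.factorial (ℓ - 1)) := by rw [← hcard]; exact hsum
    _ < ℓ * (Nat.factorial ℓ * Nat.factorial (ℓ - 1)) := by
        have hp : 0 < Nat.factorial ℓ * Nat.factorial (ℓ - 1) := by positivity
        have h1 : ℓ - 1 < ℓ := by omega
        exact Nat.mul_lt_mul_of_lt_of_le h1 le_rfl hp
    _ = (Nat.factorial ℓ) ^ 2 := hfact.symm

theorem T_ell_gt_sum (d : ℕ) (hd : 2 ≤ d)
    (T : ℕ → ℝ) (hT : ∀ ℓ, T ℓ = ((Nat.factorial ℓ : ℝ)) ^ 2 / ((Nat.factorial d : ℝ)) ^ 2)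
    (ℓ : ℕ) (hℓ : 2 ≤ ℓ) (hℓd : ℓ ≤ d) :
    T ℓ > ∑ k ∈ Finset.Ico 1 ℓ, (ℓ.choose k : ℝ) * T k := by
  have hdpos : (0:ℝ) < ((Nat.factorial d : ℝ)) ^ 2 := by positivity
  simp only [hT]
  have : ∑ k ∈ Finset.Ico 1 ℓ, (ℓ.choose k : ℝ) *
      (((Nat.factorial k : ℝ)) ^ 2 / ((Nat.factorial d : ℝ)) ^ 2)
      = (∑ k ∈ Finset.Ico 1 ℓ, (ℓ.choose k : ℝ) * ((Nat.factorial k : ℝ)) ^ 2)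
        / ((Nat.factorial d : ℝ)) ^ 2 := by
    rw [Finset.sum_div]
    apply Finset.sum_congr rfl
    intros; ring
  rw [this, gt_iff_lt, div_lt_div_iff₀ hdpos hdpos]
  have h := nat_sum_lt ℓ hℓ
  have hcast : (∑ k ∈ Finset.Ico 1 ℓ, (ℓ.choose k : ℝ) * ((Nat.factorial k : ℝ)) ^ 2)
      < ((Nat.factorial ℓ : ℝ)) ^ 2 := by
    have h2 := (Nat.cast_lt (α := ℝ)).mpr h
    push_cast at h2
    convert h2 using 2
  nlinarith [hcast, hdpos]
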